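/- Let a, b ∈ ℝ be such that the indicial polynomial x(x−1) + a·x + b has two distinct real roots γ₁ < γ₂. Let 0 ≤ B₁ < B₂ ≤ ∞ and let f : (B₁, B₂) → ℝ be twice differentiable and satisfy the Euler-type ODE r²·f''(r) + a·r·f'(r) + b·f(r) = φ(r) for all r ∈ (B₁, B₂), where the inhomogeneity satisfies |φ(r)| ≤ Σ_{k=1}^p c_k · r^{δ_k} for real exponents δ₁, …, δ_p with δ_k ∉ {γ₁, γ₂} for each k, and constants c_k ≥ 0. Then there exist real numbers A₁, A₂ and constants C₁, …, C_p, where each C_k depends only on a, b, δ_k and c_k (and not on B₁, B₂ or f), such that |f(r) − A₁·r^{γ₁} − A₂·r^{γ₂}| ≤ Σ_{k=1}^p C_k · r^{δ_k} for all r ∈ (B₁, B₂). -/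

import Mathlib

open Set MeasureTheory intervalIntegral

lemma rpow_le_max {l u x γ : ℝ} (hl : 0 < l) (hx : x ∈ Set.Icc l u) :
    x ^ γ ≤ max (l ^ γ) (u ^ γ) := by
  rcases le_total 0 γ with hγ | hγ
  · exact le_max_of_le_right (Real.rpow_le_rpow (hl.le.trans hx.1) hx.2 hγ)
  · exact le_max_of_le_left (Real.rpow_le_rpow_of_nonpos hl hx.1 hγ)

lemma hasDerivAt_of_sq_bound (W : ℝ → ℝ) (r C : ℝ) (h0 : W r = 0)
    (h : ∀ᶠ r' in nhds r, |W r'| ≤ C * (r' - r) ^ 2) : HasDerivAt W 0 r := by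
  rw [hasDerivAt_iff_isLittleO]
  rw [Asymptotics.isLittleO_iff]
  intro ε hε
  have h2 : ∀ᶠ x in nhds r, |x - r| ≤ ε / (|C| + 1) := by
    have : Continuous fun x : ℝ => |x - r| := by continuity
    have := this.tendsto r
    simp only [sub_self, abs_zero] at this
    exact this.eventually_le_const (by positivity)
  filter_upwards [h, h2] with x hx h2x
  simp only [h0, smul_eq_mul, mul_zero, sub_zero, Real.norm_eq_abs]
  calc |W x| ≤ C * (x - r)^2 := hx
    _ ≤ (|C| + 1) * (|x - r| * |x - r|) := by
        rw [sq]
        calc C * ((x-r) * (x-r)) ≤ |C * ((x-r)*(x-r))| := le_abs_self _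
          _ = |C| * (|x-r| * |x-r|) := by rw [abs_mul, abs_mul]
          _ ≤ (|C|+1) * (|x-r| * |x-r|) := by nlinarith [abs_nonneg (x-r), abs_nonneg C]
    _ ≤ ε * |x - r| := by
        rw [← mul_assoc]
        have h3 : (|C|+1) * |x - r| ≤ ε := by
          have hC : (0:ℝ) < |C| + 1 := by positivity
          calc (|C|+1) * |x-r| ≤ (|C|+1) * (ε / (|C|+1)) :=
                mul_le_mul_of_nonneg_left h2x hC.le
            _ = ε := by field_simp
        exact mul_le_mul_of_nonneg_right h3 (abs_nonneg _)

noncomputable def eulerGlo (a b : ℝ) : ℝ := ((1 - a) - Real.sqrt ((1 - a) ^ 2 - 4 * b)) / 2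
noncomputable def eulerGhi (a b : ℝ) : ℝ := ((1 - a) + Real.sqrt ((1 - a) ^ 2 - 4 * b)) / 2
noncomputable def eulerC (a b d cc : ℝ) : ℝ :=
  cc * (1 / |d - eulerGlo a b| + 1 / |d - eulerGhi a b|) / (eulerGhi a b - eulerGlo a b)

theorem euler_ode_asymptotics :
    ∃ C : ℝ → ℝ → ℝ → ℝ → ℝ,
      ∀ (a b γ₁ γ₂ : ℝ), γ₁ < γ₂ →
      γ₁ ^ 2 + (a - 1) * γ₁ + b = 0 →
      γ₂ ^ 2 + (a - 1) * γ₂ + b = 0 →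
      ∀ (p : ℕ) (δ c : Fin p → ℝ),
      (∀ k, 0 ≤ c k) →
      (∀ k, δ k ≠ γ₁ ∧ δ k ≠ γ₂) →
      ∀ (B₁ : ℝ) (B₂ : EReal), 0 ≤ B₁ → (B₁ : EReal) < B₂ →
      ∀ f f' f'' φ : ℝ → ℝ,
      (∀ r : ℝ, B₁ < r → (r : EReal) < B₂ →
        HasDerivAt f (f' r) r ∧ HasDerivAt f' (f'' r) r ∧
        r ^ 2 * f'' r + a * r * f' r + b * f r = φ r ∧
        |φ r| ≤ ∑ k, c k * r ^ (δ k)) →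
      ∃ A₁ A₂ : ℝ, ∀ r : ℝ, B₁ < r → (r : EReal) < B₂ →
        |f r - A₁ * r ^ γ₁ - A₂ * r ^ γ₂| ≤ ∑ k, C a b (δ k) (c k) * r ^ (δ k) := by
  classical
  refine ⟨eulerC, ?_⟩
  intro a b γ₁ γ₂ hγlt hroot1 hroot2 p δ c hc hδ B₁ B₂ hB₁ hBB f f' f'' φ hf
  have hγne : γ₂ - γ₁ > 0 := sub_pos.mpr hγlt
  have hsum : γ₁ + γ₂ = 1 - a := by
    have h1 : (γ₂ - γ₁) * (γ₁ + γ₂ + a - 1) = 0 := by linear_combination hroot2 - hroot1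
    rcases mul_eq_zero.mp h1 with h | h
    · exact absurd h (by linarith)
    · linarith
  have hprod : γ₁ * γ₂ = b := by linear_combination γ₁ * hsum - hroot1
  have hsq : (1 - a) ^ 2 - 4 * b = (γ₂ - γ₁) ^ 2 := by
    linear_combination (-(γ₁ + γ₂) - (1 - a)) * hsum + 4 * hprod
  have hsqrt : Real.sqrt ((1 - a) ^ 2 - 4 * b) = γ₂ - γ₁ := by
    rw [hsq]; exact Real.sqrt_sq hγne.le
  have hlo : eulerGlo a b = γ₁ := by unfold eulerGlo; rw [hsqrt, ← hsum]; ring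
  have hhi : eulerGhi a b = γ₂ := by unfold eulerGhi; rw [hsqrt, ← hsum]; ring
  have hCval : ∀ k, eulerC a b (δ k) (c k)
      = c k * (1 / |δ k - γ₁| + 1 / |δ k - γ₂|) / (γ₂ - γ₁) := by
    intro k; unfold eulerC; rw [hlo, hhi]
  -- the working interval
  obtain ⟨ρ₀, hρ₁E, hρ₂⟩ := EReal.lt_iff_exists_real_btwn.mp hBB
  have hρ₁ : B₁ < ρ₀ := EReal.coe_lt_coe_iff.mp hρ₁E
  set S : Set ℝ := {r : ℝ | B₁ < r ∧ (r : EReal) < B₂} with hSdef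
  have hSopen : IsOpen S := by
    have : S = Ioi B₁ ∩ ((↑) : ℝ → EReal) ⁻¹' (Iio B₂) := rfl
    rw [this]
    exact isOpen_Ioi.inter (isOpen_Iio.preimage continuous_coe_real_ereal)
  have hρS : ρ₀ ∈ S := ⟨hρ₁, hρ₂⟩
  have hSpos : ∀ ⦃r⦄, r ∈ S → 0 < r := fun r hr => hB₁.trans_lt hr.1
  have hSuIcc : ∀ {x y : ℝ}, x ∈ S → y ∈ S → uIcc x y ⊆ S := by
    intro x y hx hy z hz
    rw [Set.mem_uIcc] at hz
    constructor
    · rcases hz with ⟨h1, _⟩ | ⟨h1, _⟩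
      · exact lt_of_lt_of_le hx.1 h1
      · exact lt_of_lt_of_le hy.1 h1
    · rcases hz with ⟨_, h2⟩ | ⟨_, h2⟩
      · exact lt_of_le_of_lt (EReal.coe_le_coe_iff.mpr h2) hy.2
      · exact lt_of_le_of_lt (EReal.coe_le_coe_iff.mpr h2) hx.2
  have hf1 : ∀ r ∈ S, HasDerivAt f (f' r) r := fun r hr => (hf r hr.1 hr.2).1
  have hf2 : ∀ r ∈ S, HasDerivAt f' (f'' r) r := fun r hr => (hf r hr.1 hr.2).2.1
  have hode : ∀ r ∈ S, r ^ 2 * f'' r + a * r * f' r + b * f r = φ r :=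
    fun r hr => (hf r hr.1 hr.2).2.2.1
  set den : ℝ → ℝ := fun u => ∑ k, c k * u ^ (δ k) with hdendef
  have hφb : ∀ r ∈ S, |φ r| ≤ den r := fun r hr => (hf r hr.1 hr.2).2.2.2
  -- measurability facts
  have hrpm : ∀ e : ℝ, Measurable fun x : ℝ => x ^ e := fun e =>
    measurable_of_continuousOn_compl_singleton 0 (fun x hx =>
      (Real.continuousAt_rpow_const x _ (Or.inl hx)).continuousWithinAt)
  have hrpc : ∀ e : ℝ, ContinuousOn (fun x : ℝ => x ^ e) {x : ℝ | x ≠ 0} := fun e x hx =>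
    (Real.continuousAt_rpow_const x _ (Or.inl hx)).continuousWithinAt
  have hdenm : Measurable den :=
    Finset.measurable_sum _ (fun k _ => (hrpm (δ k)).const_mul _)
  have hdenc : ContinuousOn den {x : ℝ | x ≠ 0} :=
    continuousOn_finset_sum _ (fun k _ => ((hrpc (δ k)).const_smul (c k)))
  have hmS : MeasurableSet S := hSopen.measurableSet
  have hφmeas : AEStronglyMeasurable φ (volume.restrict S) := by
    have hfc : ContinuousOn f S := fun r hr => ((hf1 r hr).continuousAt).continuousWithinAt
    have h1 : AEStronglyMeasurable
        (fun r : ℝ => r ^ 2 * deriv f' r + a * r * deriv f r + b * f r)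
        (volume.restrict S) := by
      refine AEStronglyMeasurable.add (AEStronglyMeasurable.add ?_ ?_) ?_
      · exact (((continuous_pow 2).measurable).mul (measurable_deriv f')).aestronglyMeasurable
      · exact (((measurable_const.mul measurable_id).mul (measurable_deriv f))).aestronglyMeasurable
      · exact (hfc.aestronglyMeasurable hmS).const_mul b
    refine h1.congr ?_
    rw [Filter.EventuallyEq, ae_restrict_iff' hmS]
    refine .of_forall (fun r hr => ?_)
    rw [(hf1 r hr).deriv, (hf2 r hr).deriv]
    exact hode r hr
  -- integrability on subintervals of S
  have hII : ∀ χ : ℝ → ℝ, AEStronglyMeasurable χ (volume.restrict S) →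
      (∀ u ∈ S, |χ u| ≤ den u) → ∀ e : ℝ, ∀ x ∈ S, ∀ y ∈ S,
      IntervalIntegrable (fun u => u ^ e * χ u) volume x y := by
    intro χ hχm hχb e x hx y hy
    have hsubIcc : uIcc x y ⊆ S := hSuIcc hx hy
    have hsub : uIoc x y ⊆ S := fun z hz => hsubIcc (Ioc_subset_Icc_self hz)
    have hpos : ∀ u ∈ uIcc x y, 0 < u := fun u hu => hSpos (hsubIcc hu)
    have hcont : ContinuousOn (fun u => u ^ e * den u) (uIcc x y) :=
      ((hrpc e).mono (fun u hu => (hpos u hu).ne')).mul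
        (hdenc.mono (fun u hu => (hpos u hu).ne'))
    obtain ⟨M, hM⟩ := isCompact_uIcc.exists_bound_of_continuousOn hcont
    rw [intervalIntegrable_iff]
    have hfin : volume (uIoc x y) < ⊤ := measure_Ioc_lt_top
    refine Integrable.mono' (g := fun _ => M) (integrableOn_const hfin.ne)
      (((hrpm e).aestronglyMeasurable).mul
        (hχm.mono_measure (Measure.restrict_mono hsub le_rfl))) ?_
    rw [ae_restrict_iff' measurableSet_uIoc]
    refine .of_forall (fun u hu => ?_)
    have hu' : u ∈ uIcc x y := Ioc_subset_Icc_self hu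
    have hup : 0 < u := hpos u hu'
    have h1 : |χ u| ≤ den u := hχb u (hsub hu)
    have h2 : ‖u ^ e * den u‖ ≤ M := hM u hu'
    rw [Real.norm_eq_abs, abs_mul] at h2 ⊢
    have hre : 0 ≤ u ^ e := (Real.rpow_pos_of_pos hup e).le
    have hden0 : 0 ≤ den u := (abs_nonneg _).trans h1
    calc |u ^ e| * |χ u| ≤ |u ^ e| * den u := by
          exact mul_le_mul_of_nonneg_left h1 (abs_nonneg _)
      _ = |u ^ e| * |den u| := by rw [abs_of_nonneg hden0]
      _ ≤ M := h2
  -- Step 1: first-order reduction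
  have hgder : ∀ r ∈ S, HasDerivAt (fun t => t * f' t - γ₂ * f t)
      (1 * f' r + r * f'' r - γ₂ * f' r) r := by
    intro r hr
    exact ((hasDerivAt_id r).mul (hf2 r hr)).sub (HasDerivAt.const_mul γ₂ (hf1 r hr))
  have hPder : ∀ r ∈ S, HasDerivAt (fun t => t ^ (-γ₁) * (t * f' t - γ₂ * f t))
      (r ^ (-γ₁ - 1) * φ r) r := by
    intro r hr
    have hrpos := hSpos hr
    have hr0 : r ≠ 0 := hrpos.ne'
    have h1 : HasDerivAt (fun t : ℝ => t ^ (-γ₁)) (-γ₁ * r ^ (-γ₁ - 1)) r :=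
      Real.hasDerivAt_rpow_const (Or.inl hr0)
    have h2 := h1.mul (hgder r hr)
    refine h2.congr_deriv ?_
    have e1 : r ^ (-γ₁) = r ^ (-γ₁ - 1) * r := by
      rw [← Real.rpow_add_one hr0 (-γ₁ - 1)]
      congr 1
      ring
    rw [← hode r hr, e1]
    linear_combination (-(r ^ (-γ₁ - 1) * r * f' r)) * hsum + (r ^ (-γ₁ - 1) * f r) * hprod
  have hφII : ∀ e : ℝ, ∀ x ∈ S, ∀ y ∈ S,
      IntervalIntegrable (fun u => u ^ e * φ u) volume x y := hII φ hφmeas hφb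
  set I : ℝ → ℝ → ℝ := fun γr r => ∫ u in ρ₀..r, u ^ (-γr - 1) * φ u with hIdef
  have hstep1 : ∀ r ∈ S, I γ₁ r
      = r ^ (-γ₁) * (r * f' r - γ₂ * f r) - ρ₀ ^ (-γ₁) * (ρ₀ * f' ρ₀ - γ₂ * f ρ₀) :=
    fun r hr => integral_eq_sub_of_hasDerivAt (fun t ht => hPder t (hSuIcc hρS hr ht))
      (hφII (-γ₁ - 1) ρ₀ hρS r hr)
  set K₁ : ℝ := ρ₀ ^ (-γ₁) * (ρ₀ * f' ρ₀ - γ₂ * f ρ₀) with hK₁def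
  have hgval : ∀ r ∈ S, r * f' r - γ₂ * f r = r ^ γ₁ * K₁ + r ^ γ₁ * I γ₁ r := by
    intro r hr
    have hrpos := hSpos hr
    have h := hstep1 r hr
    have hrg : r ^ γ₁ * r ^ (-γ₁) = 1 := by
      rw [← Real.rpow_add hrpos]; simp
    linear_combination (-(r ^ γ₁)) * h - (r * f' r - γ₂ * f r) * hrg
  -- the particular-solution candidate and its derivative
  set V : ℝ → ℝ := fun r => r ^ γ₂ * I γ₂ r - r ^ γ₁ * I γ₁ r with hVdef
  have hVder : ∀ r ∈ S, HasDerivAt V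
      (γ₂ * r ^ (γ₂ - 1) * I γ₂ r - γ₁ * r ^ (γ₁ - 1) * I γ₁ r) r := by
    intro r hr
    have hrpos := hSpos hr
    have hr0 : r ≠ 0 := hrpos.ne'
    have hU : HasDerivAt (fun t => t ^ γ₂ * I γ₂ r - t ^ γ₁ * I γ₁ r)
        (γ₂ * r ^ (γ₂ - 1) * I γ₂ r - γ₁ * r ^ (γ₁ - 1) * I γ₁ r) r := by
      have h2 : HasDerivAt (fun t : ℝ => t ^ γ₂) (γ₂ * r ^ (γ₂ - 1)) r :=
        Real.hasDerivAt_rpow_const (Or.inl hr0)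
      have h1 : HasDerivAt (fun t : ℝ => t ^ γ₁) (γ₁ * r ^ (γ₁ - 1)) r :=
        Real.hasDerivAt_rpow_const (Or.inl hr0)
      exact (h2.mul_const _).sub (h1.mul_const _)
    set W : ℝ → ℝ := fun t => t ^ γ₂ * (∫ u in r..t, u ^ (-γ₂ - 1) * φ u)
        - t ^ γ₁ * (∫ u in r..t, u ^ (-γ₁ - 1) * φ u) with hWdef
    have hW0 : W r = 0 := by simp [hWdef]
    obtain ⟨ε, hε, hball⟩ := Metric.isOpen_iff.mp hSopen r hr
    set η : ℝ := min (ε / 2) (r / 2) with hηdef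
    have hη : 0 < η := lt_min (by linarith) (by linarith)
    have hηε : η < ε := lt_of_le_of_lt (min_le_left _ _) (by linarith)
    have hIccS : Icc (r - η) (r + η) ⊆ S := by
      refine subset_trans ?_ hball
      intro z hz
      rw [Metric.mem_ball, Real.dist_eq]
      have h1 : |z - r| ≤ η := abs_sub_le_iff.mpr ⟨by linarith [hz.2], by linarith [hz.1]⟩
      exact lt_of_le_of_lt h1 hηε
    have hlpos : 0 < r - η := by
      have : η ≤ r / 2 := min_le_right _ _
      linarith
    have hIccpos : ∀ u ∈ Icc (r - η) (r + η), 0 < u := fun u hu => lt_of_lt_of_le hlpos hu.1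
    obtain ⟨Mφ, hMφ⟩ := (isCompact_Icc).exists_bound_of_continuousOn
      (hdenc.mono (fun u hu => (hIccpos u hu).ne') : ContinuousOn den (Icc (r - η) (r + η)))
    have hMφ' : ∀ u ∈ Icc (r - η) (r + η), |φ u| ≤ Mφ := by
      intro u hu
      exact le_trans (hφb u (hIccS hu)) (le_trans (le_abs_self _) (hMφ u hu))
    have hMφ0 : 0 ≤ Mφ := le_trans (abs_nonneg _)
      (hMφ' r ⟨by linarith, by linarith⟩)
    set mx : ℝ → ℝ := fun e => max ((r - η) ^ e) ((r + η) ^ e) with hmxdef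
    have hmx : ∀ e : ℝ, ∀ u ∈ Icc (r - η) (r + η), u ^ e ≤ mx e :=
      fun e u hu => rpow_le_max hlpos hu
    have hmxpos : ∀ e : ℝ, 0 < mx e :=
      fun e => lt_max_of_lt_left (Real.rpow_pos_of_pos hlpos e)
    set Lk : ℝ := |γ₂ + 1| * (mx γ₂ * mx (-γ₂ - 2)) + |γ₁ + 1| * (mx γ₁ * mx (-γ₁ - 2))
      with hLkdef
    have hLk0 : 0 ≤ Lk :=
      add_nonneg (mul_nonneg (abs_nonneg _) (mul_nonneg (hmxpos _).le (hmxpos _).le))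
        (mul_nonneg (abs_nonneg _) (mul_nonneg (hmxpos _).le (hmxpos _).le))
    have hker : ∀ r' ∈ Icc (r - η) (r + η), ∀ u ∈ Icc (r - η) (r + η),
        |r' ^ γ₂ * u ^ (-γ₂ - 1) - r' ^ γ₁ * u ^ (-γ₁ - 1)| ≤ Lk * |u - r'| := by
      intro r' hr' u hu
      have hr'pos := hIccpos r' hr'
      have hder : ∀ v ∈ Icc (r - η) (r + η),
          HasDerivWithinAt (fun w : ℝ => r' ^ γ₂ * w ^ (-γ₂ - 1) - r' ^ γ₁ * w ^ (-γ₁ - 1))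
            (r' ^ γ₂ * ((-γ₂ - 1) * v ^ (-γ₂ - 1 - 1)) - r' ^ γ₁ * ((-γ₁ - 1) * v ^ (-γ₁ - 1 - 1)))
            (Icc (r - η) (r + η)) v := by
        intro v hv
        exact (((Real.hasDerivAt_rpow_const (p := -γ₂ - 1) (Or.inl (hIccpos v hv).ne')).const_mul
          (r' ^ γ₂)).sub ((Real.hasDerivAt_rpow_const (p := -γ₁ - 1)
            (Or.inl (hIccpos v hv).ne')).const_mul (r' ^ γ₁))).hasDerivWithinAt
      have hbd : ∀ v ∈ Icc (r - η) (r + η),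
          ‖r' ^ γ₂ * ((-γ₂ - 1) * v ^ (-γ₂ - 1 - 1)) - r' ^ γ₁ * ((-γ₁ - 1) * v ^ (-γ₁ - 1 - 1))‖
            ≤ Lk := by
        intro v hv
        have hvpos := hIccpos v hv
        have e2 : (-γ₂ - 1 - 1 : ℝ) = -γ₂ - 2 := by ring
        have e1 : (-γ₁ - 1 - 1 : ℝ) = -γ₁ - 2 := by ring
        rw [Real.norm_eq_abs, e2, e1]
        have b2 : |r' ^ γ₂ * ((-γ₂ - 1) * v ^ (-γ₂ - 2))| ≤ |γ₂ + 1| * (mx γ₂ * mx (-γ₂ - 2)) := by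
          rw [abs_mul, abs_mul]
          have k1 : |r' ^ γ₂| ≤ mx γ₂ := by
            rw [abs_of_nonneg (Real.rpow_pos_of_pos hr'pos _).le]; exact hmx _ r' hr'
          have k2 : |v ^ (-γ₂ - 2)| ≤ mx (-γ₂ - 2) := by
            rw [abs_of_nonneg (Real.rpow_pos_of_pos hvpos _).le]; exact hmx _ v hv
          have k3 : |(-γ₂ - 1 : ℝ)| = |γ₂ + 1| := by rw [← abs_neg]; congr 1; ring
          rw [k3]
          calc |r' ^ γ₂| * (|γ₂ + 1| * |v ^ (-γ₂ - 2)|)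
              ≤ mx γ₂ * (|γ₂ + 1| * mx (-γ₂ - 2)) := by
                apply mul_le_mul k1 (mul_le_mul_of_nonneg_left k2 (abs_nonneg _))
                  (mul_nonneg (abs_nonneg _) (abs_nonneg _)) (hmxpos _).le
            _ = |γ₂ + 1| * (mx γ₂ * mx (-γ₂ - 2)) := by ring
        have b1 : |r' ^ γ₁ * ((-γ₁ - 1) * v ^ (-γ₁ - 2))| ≤ |γ₁ + 1| * (mx γ₁ * mx (-γ₁ - 2)) := by
          rw [abs_mul, abs_mul]
          have k1 : |r' ^ γ₁| ≤ mx γ₁ := by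
            rw [abs_of_nonneg (Real.rpow_pos_of_pos hr'pos _).le]; exact hmx _ r' hr'
          have k2 : |v ^ (-γ₁ - 2)| ≤ mx (-γ₁ - 2) := by
            rw [abs_of_nonneg (Real.rpow_pos_of_pos hvpos _).le]; exact hmx _ v hv
          have k3 : |(-γ₁ - 1 : ℝ)| = |γ₁ + 1| := by rw [← abs_neg]; congr 1; ring
          rw [k3]
          calc |r' ^ γ₁| * (|γ₁ + 1| * |v ^ (-γ₁ - 2)|)
              ≤ mx γ₁ * (|γ₁ + 1| * mx (-γ₁ - 2)) := by
                apply mul_le_mul k1 (mul_le_mul_of_nonneg_left k2 (abs_nonneg _))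
                  (mul_nonneg (abs_nonneg _) (abs_nonneg _)) (hmxpos _).le
            _ = |γ₁ + 1| * (mx γ₁ * mx (-γ₁ - 2)) := by ring
        calc |r' ^ γ₂ * ((-γ₂ - 1) * v ^ (-γ₂ - 2)) - r' ^ γ₁ * ((-γ₁ - 1) * v ^ (-γ₁ - 2))|
            ≤ |r' ^ γ₂ * ((-γ₂ - 1) * v ^ (-γ₂ - 2))| + |r' ^ γ₁ * ((-γ₁ - 1) * v ^ (-γ₁ - 2))| :=
              abs_sub _ _
          _ ≤ Lk := by rw [hLkdef]; exact add_le_add b2 b1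
      have hMVT := (convex_Icc (r - η) (r + η)).norm_image_sub_le_of_norm_hasDerivWithin_le
        hder hbd hr' hu
      have hzero : r' ^ γ₂ * r' ^ (-γ₂ - 1) - r' ^ γ₁ * r' ^ (-γ₁ - 1) = 0 := by
        have e1 : γ₂ + (-γ₂ - 1) = γ₁ + (-γ₁ - 1) := by ring
        rw [← Real.rpow_add hr'pos, ← Real.rpow_add hr'pos, e1, sub_self]
      have := hMVT
      rw [Real.norm_eq_abs, Real.norm_eq_abs] at this
      calc |r' ^ γ₂ * u ^ (-γ₂ - 1) - r' ^ γ₁ * u ^ (-γ₁ - 1)|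
          = |(r' ^ γ₂ * u ^ (-γ₂ - 1) - r' ^ γ₁ * u ^ (-γ₁ - 1))
            - (r' ^ γ₂ * r' ^ (-γ₂ - 1) - r' ^ γ₁ * r' ^ (-γ₁ - 1))| := by rw [hzero, sub_zero]
        _ ≤ Lk * |u - r'| := this
    have hWb : ∀ r' ∈ Icc (r - η) (r + η), |W r'| ≤ (Lk * Mφ) * (r' - r) ^ 2 := by
      intro r' hr'
      have hr'S : r' ∈ S := hIccS hr'
      have hi2 : IntervalIntegrable (fun u => u ^ (-γ₂ - 1) * φ u) volume r r' :=
        hφII _ r hr r' hr'S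
      have hi1 : IntervalIntegrable (fun u => u ^ (-γ₁ - 1) * φ u) volume r r' :=
        hφII _ r hr r' hr'S
      have hcomb : W r' = ∫ u in r..r',
          (r' ^ γ₂ * (u ^ (-γ₂ - 1) * φ u) - r' ^ γ₁ * (u ^ (-γ₁ - 1) * φ u)) := by
        rw [hWdef]
        rw [intervalIntegral.integral_sub (hi2.const_mul _) (hi1.const_mul _),
          intervalIntegral.integral_const_mul, intervalIntegral.integral_const_mul]
      rw [hcomb]
      have hrmem : r ∈ Icc (r - η) (r + η) := ⟨by linarith, by linarith⟩
      have hbound : ∀ u ∈ uIoc r r',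
          ‖r' ^ γ₂ * (u ^ (-γ₂ - 1) * φ u) - r' ^ γ₁ * (u ^ (-γ₁ - 1) * φ u)‖
            ≤ Lk * |r' - r| * Mφ := by
        intro u hu
        have huIcc : u ∈ Icc (r - η) (r + η) := by
          have h1 : u ∈ uIcc r r' := Ioc_subset_Icc_self hu
          exact (Set.ordConnected_Icc.uIcc_subset hrmem hr') h1
        have h1 : |r' ^ γ₂ * u ^ (-γ₂ - 1) - r' ^ γ₁ * u ^ (-γ₁ - 1)| ≤ Lk * |u - r'| :=
          hker r' hr' u huIcc
        have h2 : |u - r'| ≤ |r' - r| := by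
          rcases le_total r r' with hle | hle
          · rw [Set.uIoc_of_le hle] at hu
            rw [abs_of_nonpos (by linarith [hu.2]), abs_of_nonneg (by linarith)]
            linarith [hu.1]
          · rw [Set.uIoc_of_ge hle] at hu
            rw [abs_of_nonneg (by linarith [hu.1]), abs_of_nonpos (by linarith)]
            linarith [hu.2]
        have h3 : |φ u| ≤ Mφ := hMφ' u huIcc
        have heq : r' ^ γ₂ * (u ^ (-γ₂ - 1) * φ u) - r' ^ γ₁ * (u ^ (-γ₁ - 1) * φ u)
            = (r' ^ γ₂ * u ^ (-γ₂ - 1) - r' ^ γ₁ * u ^ (-γ₁ - 1)) * φ u := by ring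
        rw [Real.norm_eq_abs, heq, abs_mul]
        calc |r' ^ γ₂ * u ^ (-γ₂ - 1) - r' ^ γ₁ * u ^ (-γ₁ - 1)| * |φ u|
            ≤ (Lk * |u - r'|) * Mφ :=
              mul_le_mul h1 h3 (abs_nonneg _) (mul_nonneg hLk0 (abs_nonneg _))
          _ ≤ (Lk * |r' - r|) * Mφ :=
              mul_le_mul_of_nonneg_right (mul_le_mul_of_nonneg_left h2 hLk0) hMφ0
      have := intervalIntegral.norm_integral_le_of_norm_le_const hbound
      rw [Real.norm_eq_abs] at this
      calc |∫ u in r..r', (r' ^ γ₂ * (u ^ (-γ₂ - 1) * φ u) - r' ^ γ₁ * (u ^ (-γ₁ - 1) * φ u))|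
          ≤ Lk * |r' - r| * Mφ * |r' - r| := this
        _ = (Lk * Mφ) * (r' - r) ^ 2 := by rw [← sq_abs (r' - r)]; ring
    have hWder : HasDerivAt W 0 r := by
      apply hasDerivAt_of_sq_bound W r (Lk * Mφ) hW0
      have hmem : Icc (r - η) (r + η) ∈ nhds r := Icc_mem_nhds (by linarith) (by linarith)
      filter_upwards [hmem] with x hx using hWb x hx
    have hVeq : ∀ r' ∈ S, V r' = (r' ^ γ₂ * I γ₂ r - r' ^ γ₁ * I γ₁ r) + W r' := by
      intro r' hr'
      have h2 := integral_add_adjacent_intervals (hφII (-γ₂ - 1) ρ₀ hρS r hr)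
        (hφII (-γ₂ - 1) r hr r' hr')
      have h1 := integral_add_adjacent_intervals (hφII (-γ₁ - 1) ρ₀ hρS r hr)
        (hφII (-γ₁ - 1) r hr r' hr')
      simp only [hVdef, hWdef, hIdef]
      rw [← h2, ← h1]
      ring
    have hfinal := hU.add hWder
    rw [add_zero] at hfinal
    refine hfinal.congr_of_eventuallyEq ?_
    filter_upwards [hSopen.mem_nhds hr] with x hx using hVeq x hx
  -- second reduction
  have hQder : ∀ r ∈ S, HasDerivAt (fun t => t ^ (-γ₂) * ((γ₂ - γ₁) * f t - V t))
      ((γ₂ - γ₁) * K₁ * r ^ (γ₁ - γ₂ - 1)) r := by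
    intro r hr
    have hrpos := hSpos hr
    have hr0 : r ≠ 0 := hrpos.ne'
    have h1 : HasDerivAt (fun t : ℝ => t ^ (-γ₂)) (-γ₂ * r ^ (-γ₂ - 1)) r :=
      Real.hasDerivAt_rpow_const (Or.inl hr0)
    have h2 : HasDerivAt (fun t => (γ₂ - γ₁) * f t - V t)
        ((γ₂ - γ₁) * f' r - (γ₂ * r ^ (γ₂ - 1) * I γ₂ r - γ₁ * r ^ (γ₁ - 1) * I γ₁ r)) r :=
      (HasDerivAt.const_mul _ (hf1 r hr)).sub (hVder r hr)
    have h3 := h1.mul h2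
    refine h3.congr_deriv ?_
    have hg := hgval r hr
    have e0 : r ^ (-γ₂) = r ^ (-γ₂ - 1) * r := by
      rw [← Real.rpow_add_one hr0 (-γ₂ - 1)]; congr 1; ring
    have e2 : r ^ γ₂ = r ^ (γ₂ - 1) * r := by
      rw [← Real.rpow_add_one hr0 (γ₂ - 1)]; congr 1; ring
    have e1 : r ^ γ₁ = r ^ (γ₁ - 1) * r := by
      rw [← Real.rpow_add_one hr0 (γ₁ - 1)]; congr 1; ring
    have e3 : r ^ (γ₁ - γ₂ - 1) = (r ^ (γ₁ - 1) * r) * r ^ (-γ₂ - 1) := by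
      rw [← e1, ← Real.rpow_add hrpos]; congr 1; ring
    simp only [hVdef]
    rw [e0, e2, e1, e3]
    rw [e1] at hg
    linear_combination ((γ₂ - γ₁) * r ^ (-γ₂ - 1)) * hg
  have hAint : ∀ r ∈ S, IntervalIntegrable
      (fun s : ℝ => (γ₂ - γ₁) * K₁ * s ^ (γ₁ - γ₂ - 1)) volume ρ₀ r := by
    intro r hr
    apply ContinuousOn.intervalIntegrable
    exact continuousOn_const.mul ((hrpc (γ₁ - γ₂ - 1)).mono
      (fun s hs => (hSpos (hSuIcc hρS hr hs)).ne'))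
  have hQftc : ∀ r ∈ S,
      r ^ (-γ₂) * ((γ₂ - γ₁) * f r - V r) - ρ₀ ^ (-γ₂) * ((γ₂ - γ₁) * f ρ₀ - V ρ₀)
        = ∫ s in ρ₀..r, (γ₂ - γ₁) * K₁ * s ^ (γ₁ - γ₂ - 1) :=
    fun r hr => (integral_eq_sub_of_hasDerivAt
      (fun t ht => hQder t (hSuIcc hρS hr ht)) (hAint r hr)).symm
  have hne12 : γ₁ - γ₂ - 1 ≠ -1 := by intro hcon; exact hγne.ne' (by linarith)
  have hintval : ∀ r ∈ S, (∫ s in ρ₀..r, (γ₂ - γ₁) * K₁ * s ^ (γ₁ - γ₂ - 1))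
      = K₁ * ρ₀ ^ (γ₁ - γ₂) - K₁ * r ^ (γ₁ - γ₂) := by
    intro r hr
    rw [intervalIntegral.integral_const_mul]
    rw [integral_rpow (Or.inr ⟨hne12, fun hmem => (hSpos (hSuIcc hρS hr hmem)).ne rfl⟩)]
    have ee : γ₁ - γ₂ - 1 + 1 = γ₁ - γ₂ := by ring
    rw [ee]
    have hne : γ₁ - γ₂ ≠ 0 := by intro hcon; exact hγne.ne' (by linarith)
    field_simp
    ring
  have hrep : ∀ r ∈ S, (γ₂ - γ₁) * f r = V r + (-K₁) * r ^ γ₁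
      + (ρ₀ ^ (-γ₂) * ((γ₂ - γ₁) * f ρ₀ - V ρ₀) + K₁ * ρ₀ ^ (γ₁ - γ₂)) * r ^ γ₂ := by
    intro r hr
    have hrpos := hSpos hr
    have h := (hQftc r hr).trans (hintval r hr)
    have hrg : r ^ γ₂ * r ^ (-γ₂) = 1 := by rw [← Real.rpow_add hrpos]; simp
    have hrg2 : r ^ γ₂ * r ^ (γ₁ - γ₂) = r ^ γ₁ := by
      rw [← Real.rpow_add hrpos]; congr 1; ring
    linear_combination (r ^ γ₂) * h - ((γ₂ - γ₁) * f r - V r) * hrg - K₁ * hrg2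
  -- splitting of the inhomogeneity
  set rho : Fin p → ℝ → ℝ :=
    fun k u => if den u = 0 then 0 else (c k * u ^ δ k) / den u with hrhodef
  set φk : Fin p → ℝ → ℝ := fun k u => φ u * rho k u with hφkdef
  have hrhom : ∀ k, Measurable (rho k) := by
    intro k
    apply Measurable.ite (hdenm (measurableSet_singleton 0)) measurable_const
    exact ((hrpm (δ k)).const_mul _).div hdenm
  have hφkm : ∀ k, AEStronglyMeasurable (φk k) (volume.restrict S) :=
    fun k => hφmeas.mul ((hrhom k).aestronglyMeasurable)
  have htermpos : ∀ (k : Fin p) (u : ℝ), 0 < u → 0 ≤ c k * u ^ δ k :=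
    fun k u hu => mul_nonneg (hc k) (Real.rpow_pos_of_pos hu _).le
  have hdennn : ∀ u : ℝ, 0 < u → 0 ≤ den u :=
    fun u hu => Finset.sum_nonneg fun j _ => htermpos j u hu
  have hterm_le : ∀ (k : Fin p) (u : ℝ), 0 < u → c k * u ^ δ k ≤ den u := by
    intro k u hu
    exact Finset.single_le_sum (f := fun j => c j * u ^ δ j)
      (fun j _ => htermpos j u hu) (Finset.mem_univ k)
  have hφk_bd : ∀ (k : Fin p), ∀ u ∈ S, |φk k u| ≤ c k * u ^ δ k := by
    intro k u hu
    have hupos := hSpos hu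
    simp only [hφkdef, hrhodef]
    rcases eq_or_ne (den u) 0 with hd | hd
    · rw [hd, if_pos rfl, mul_zero, abs_zero]
      exact htermpos k u hupos
    · rw [if_neg hd]
      have hdpos : 0 < den u := lt_of_le_of_ne (hdennn u hupos) (Ne.symm hd)
      have hq : 0 ≤ (c k * u ^ δ k) / den u :=
        div_nonneg (htermpos k u hupos) hdpos.le
      rw [abs_mul, abs_of_nonneg hq]
      calc |φ u| * ((c k * u ^ δ k) / den u)
          ≤ den u * ((c k * u ^ δ k) / den u) :=
            mul_le_mul_of_nonneg_right (hφb u hu) hq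
        _ = c k * u ^ δ k := by field_simp
  have hφk_bdden : ∀ (k : Fin p), ∀ u ∈ S, |φk k u| ≤ den u :=
    fun k u hu => (hφk_bd k u hu).trans (hterm_le k u (hSpos hu))
  have hφk_sum : ∀ u ∈ S, (∑ k, φk k u) = φ u := by
    intro u hu
    simp only [hφkdef, hrhodef]
    rcases eq_or_ne (den u) 0 with hd | hd
    · have hφ0 : φ u = 0 := by
        have h1 := hφb u hu
        rw [hd] at h1
        exact abs_eq_zero.mp (le_antisymm h1 (abs_nonneg _))
      simp [hφ0, hd]
    · simp only [if_neg hd]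
      rw [← Finset.mul_sum, ← Finset.sum_div]
      have hds : (∑ k, c k * u ^ δ k) = den u := rfl
      rw [hds, div_self hd, mul_one]
  -- the endpoint-normalized primitives
  have hIocS : ∀ r ∈ S, Ioc B₁ r ⊆ S := by
    intro r hr u hu
    exact ⟨hu.1, lt_of_le_of_lt (EReal.coe_le_coe_iff.mpr hu.2) hr.2⟩
  have key : ∀ (k : Fin p) (γr : ℝ), δ k ≠ γr →
      ∃ Φ : ℝ → ℝ, ∃ s : ℝ, |s| = 1 ∧
        (∀ r ∈ S, (∫ u in ρ₀..r, u ^ (-γr - 1) * φk k u) = s * (Φ r - Φ ρ₀)) ∧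
        (∀ r ∈ S, r ^ γr * |Φ r| ≤ c k * r ^ δ k / |δ k - γr|) := by
    intro k γr hnedk
    set ψ : ℝ → ℝ := fun u => u ^ (-γr - 1) * φk k u with hψdef
    have hψbd : ∀ u ∈ S, |ψ u| ≤ c k * u ^ (δ k - γr - 1) := by
      intro u hu
      have hupos := hSpos hu
      have hx : u ^ (-γr - 1) * u ^ δ k = u ^ (δ k - γr - 1) := by
        rw [← Real.rpow_add hupos]; congr 1; ring
      have h0 : 0 ≤ u ^ (-γr - 1) := (Real.rpow_pos_of_pos hupos _).le
      calc |ψ u| = u ^ (-γr - 1) * |φk k u| := by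
            rw [hψdef]; rw [abs_mul, abs_of_nonneg h0]
        _ ≤ u ^ (-γr - 1) * (c k * u ^ δ k) :=
            mul_le_mul_of_nonneg_left (hφk_bd k u hu) h0
        _ = c k * (u ^ (-γr - 1) * u ^ δ k) := by ring
        _ = c k * u ^ (δ k - γr - 1) := by rw [hx]
    have hψmes : ∀ (A : Set ℝ), A ⊆ S → MeasurableSet A →
        AEStronglyMeasurable ψ (volume.restrict A) := by
      intro A hAS hAm
      exact ((hrpm (-γr - 1)).aestronglyMeasurable).mul
        ((hφkm k).mono_measure (Measure.restrict_mono hAS le_rfl))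
    rcases hnedk.lt_or_gt with hlt | hgt
    · -- δ k < γr : integrate from the right endpoint
      have hTm : ∀ r : ℝ, MeasurableSet {u : ℝ | r < u ∧ (u : EReal) < B₂} := by
        intro r
        have : {u : ℝ | r < u ∧ (u : EReal) < B₂}
            = Ioi r ∩ ((↑) : ℝ → EReal) ⁻¹' (Iio B₂) := rfl
        rw [this]
        exact (isOpen_Ioi.inter (isOpen_Iio.preimage continuous_coe_real_ereal)).measurableSet
      have hTS : ∀ r ∈ S, {u : ℝ | r < u ∧ (u : EReal) < B₂} ⊆ S :=
        fun r hr u hu => ⟨hr.1.trans hu.1, hu.2⟩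
      have hTIoi : ∀ r : ℝ, {u : ℝ | r < u ∧ (u : EReal) < B₂} ⊆ Ioi r := fun r u hu => hu.1
      have hint : ∀ r ∈ S, IntegrableOn ψ {u : ℝ | r < u ∧ (u : EReal) < B₂} := by
        intro r hr
        have hrpos := hSpos hr
        have hgi : IntegrableOn (fun u : ℝ => u ^ (δ k - γr - 1)) (Ioi r) :=
          integrableOn_Ioi_rpow_of_lt (by linarith) hrpos
        have hgc' : IntegrableOn (fun u : ℝ => c k * u ^ (δ k - γr - 1)) (Ioi r) :=
          hgi.const_mul (c k)
        have hgc : IntegrableOn (fun u : ℝ => c k * u ^ (δ k - γr - 1))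
            {u : ℝ | r < u ∧ (u : EReal) < B₂} :=
          hgc'.mono_set (hTIoi r)
        refine Integrable.mono' hgc (hψmes _ (hTS r hr) (hTm r)) ?_
        rw [ae_restrict_iff' (hTm r)]
        exact .of_forall fun u hu => by
          rw [Real.norm_eq_abs]; exact hψbd u (hTS r hr hu)
      refine ⟨fun r => ∫ u in {u : ℝ | r < u ∧ (u : EReal) < B₂}, ψ u, -1, by norm_num, ?_, ?_⟩
      · intro r hr
        rcases le_total ρ₀ r with hle | hle
        · have hun : Ioc ρ₀ r ∪ {u : ℝ | r < u ∧ (u : EReal) < B₂}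
              = {u : ℝ | ρ₀ < u ∧ (u : EReal) < B₂} := by
            ext u
            simp only [Set.mem_union, Set.mem_Ioc, Set.mem_setOf_eq]
            constructor
            · rintro (⟨h1, h2⟩ | ⟨h1, h2⟩)
              · exact ⟨h1, lt_of_le_of_lt (EReal.coe_le_coe_iff.mpr h2) hr.2⟩
              · exact ⟨lt_of_le_of_lt hle h1, h2⟩
            · rintro ⟨h1, h2⟩
              rcases le_or_gt u r with h3 | h3
              · exact Or.inl ⟨h1, h3⟩
              · exact Or.inr ⟨h3, h2⟩
          have hdisj : Disjoint (Ioc ρ₀ r) {u : ℝ | r < u ∧ (u : EReal) < B₂} := by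
            rw [Set.disjoint_left]
            rintro u hu1 hu2
            exact absurd hu2.1 (not_lt.mpr hu1.2)
          have hIr : IntegrableOn ψ (Ioc ρ₀ r) := by
            have h5 := hII (φk k) (hφkm k) (hφk_bdden k) (-γr - 1) ρ₀ hρS r hr
            rwa [intervalIntegrable_iff_integrableOn_Ioc_of_le hle] at h5
          have hsu := setIntegral_union hdisj (hTm r) hIr (hint r hr)
          rw [hun] at hsu
          rw [intervalIntegral.integral_of_le hle]
          linarith [hsu]
        · have hun : Ioc r ρ₀ ∪ {u : ℝ | ρ₀ < u ∧ (u : EReal) < B₂}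
              = {u : ℝ | r < u ∧ (u : EReal) < B₂} := by
            ext u
            simp only [Set.mem_union, Set.mem_Ioc, Set.mem_setOf_eq]
            constructor
            · rintro (⟨h1, h2⟩ | ⟨h1, h2⟩)
              · exact ⟨h1, lt_of_le_of_lt (EReal.coe_le_coe_iff.mpr h2) hρ₂⟩
              · exact ⟨lt_of_le_of_lt hle h1, h2⟩
            · rintro ⟨h1, h2⟩
              rcases le_or_gt u ρ₀ with h3 | h3
              · exact Or.inl ⟨h1, h3⟩
              · exact Or.inr ⟨h3, h2⟩
          have hdisj : Disjoint (Ioc r ρ₀) {u : ℝ | ρ₀ < u ∧ (u : EReal) < B₂} := by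
            rw [Set.disjoint_left]
            rintro u hu1 hu2
            exact absurd hu2.1 (not_lt.mpr hu1.2)
          have hIr : IntegrableOn ψ (Ioc r ρ₀) := by
            have h5 := hII (φk k) (hφkm k) (hφk_bdden k) (-γr - 1) r hr ρ₀ hρS
            rwa [intervalIntegrable_iff_integrableOn_Ioc_of_le hle] at h5
          have hsu := setIntegral_union hdisj (hTm ρ₀) hIr (hint ρ₀ hρS)
          rw [hun] at hsu
          rw [intervalIntegral.integral_symm, intervalIntegral.integral_of_le hle]
          linarith [hsu]
      · intro r hr
        have hrpos := hSpos hr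
        have habs : |δ k - γr| = γr - δ k := by
          rw [abs_of_neg (by linarith)]; ring
        have hgi : IntegrableOn (fun u : ℝ => u ^ (δ k - γr - 1)) (Ioi r) :=
          integrableOn_Ioi_rpow_of_lt (by linarith) hrpos
        have h1 : |∫ u in {u : ℝ | r < u ∧ (u : EReal) < B₂}, ψ u|
            ≤ ∫ u in {u : ℝ | r < u ∧ (u : EReal) < B₂}, c k * u ^ (δ k - γr - 1) := by
          rw [← Real.norm_eq_abs]
          refine le_trans (MeasureTheory.norm_integral_le_integral_norm _) ?_
          have hgc' : IntegrableOn (fun u : ℝ => c k * u ^ (δ k - γr - 1)) (Ioi r) :=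
            hgi.const_mul (c k)
          refine setIntegral_mono_on ((hint r hr).norm)
            (hgc'.mono_set (hTIoi r)) (hTm r) ?_
          intro u hu
          simpa only [Real.norm_eq_abs] using hψbd u (hTS r hr hu)
        have h2 : ∫ u in {u : ℝ | r < u ∧ (u : EReal) < B₂}, c k * u ^ (δ k - γr - 1)
            ≤ ∫ u in Ioi r, c k * u ^ (δ k - γr - 1) := by
          have hgc' : IntegrableOn (fun u : ℝ => c k * u ^ (δ k - γr - 1)) (Ioi r) :=
            hgi.const_mul (c k)
          refine setIntegral_mono_set hgc' ?_
            (HasSubset.Subset.eventuallyLE (hTIoi r))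
          filter_upwards [ae_restrict_mem measurableSet_Ioi] with u hu
          exact mul_nonneg (hc k) (Real.rpow_pos_of_pos (hrpos.trans hu) _).le
        have h3 : ∫ u in Ioi r, c k * u ^ (δ k - γr - 1)
            = c k * r ^ (δ k - γr) / (γr - δ k) := by
          rw [MeasureTheory.integral_const_mul, integral_Ioi_rpow_of_lt (by linarith) hrpos]
          have ee : δ k - γr - 1 + 1 = δ k - γr := by ring
          rw [ee]
          have hne : γr - δ k ≠ 0 := by intro hcon; exact (by linarith : δ k ≠ γr) (by linarith)
          have hne2 : δ k - γr ≠ 0 := by intro hcon; exact hne (by linarith)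
          field_simp
          ring
        have h4 : |∫ u in {u : ℝ | r < u ∧ (u : EReal) < B₂}, ψ u|
            ≤ c k * r ^ (δ k - γr) / (γr - δ k) := le_trans h1 (le_trans h2 (le_of_eq h3))
        have hx : r ^ γr * r ^ (δ k - γr) = r ^ δ k := by
          rw [← Real.rpow_add hrpos]; congr 1; ring
        calc r ^ γr * |∫ u in {u : ℝ | r < u ∧ (u : EReal) < B₂}, ψ u|
            ≤ r ^ γr * (c k * r ^ (δ k - γr) / (γr - δ k)) :=
              mul_le_mul_of_nonneg_left h4 (Real.rpow_pos_of_pos hrpos _).le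
          _ = c k * (r ^ γr * r ^ (δ k - γr)) / (γr - δ k) := by ring
          _ = c k * r ^ δ k / |δ k - γr| := by rw [hx, habs]
    · -- γr < δ k : integrate from the left endpoint
      have hint : ∀ r ∈ S, IntegrableOn ψ (Ioc B₁ r) := by
        intro r hr
        have hrpos := hSpos hr
        have hg0 : IntervalIntegrable (fun u : ℝ => u ^ (δ k - γr - 1)) volume 0 r :=
          intervalIntegral.intervalIntegrable_rpow' (by linarith)
        rw [intervalIntegrable_iff_integrableOn_Ioc_of_le hrpos.le] at hg0
        have hgc' : IntegrableOn (fun u : ℝ => c k * u ^ (δ k - γr - 1)) (Ioc 0 r) :=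
          hg0.const_mul (c k)
        have hgc : IntegrableOn (fun u : ℝ => c k * u ^ (δ k - γr - 1)) (Ioc B₁ r) :=
          hgc'.mono_set (Ioc_subset_Ioc_left hB₁)
        refine Integrable.mono' hgc (hψmes _ (hIocS r hr) measurableSet_Ioc) ?_
        rw [ae_restrict_iff' measurableSet_Ioc]
        exact .of_forall fun u hu => by
          rw [Real.norm_eq_abs]; exact hψbd u (hIocS r hr hu)
      refine ⟨fun r => ∫ u in Ioc B₁ r, ψ u, 1, by norm_num, ?_, ?_⟩
      · intro r hr
        rcases le_total ρ₀ r with hle | hle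
        · rw [intervalIntegral.integral_of_le hle]
          have hun : Ioc B₁ ρ₀ ∪ Ioc ρ₀ r = Ioc B₁ r := Ioc_union_Ioc_eq_Ioc hρ₁.le hle
          have hIr : IntegrableOn ψ (Ioc ρ₀ r) :=
            (hint r hr).mono_set (Ioc_subset_Ioc_left hρ₁.le)
          have hsu := setIntegral_union (Set.Ioc_disjoint_Ioc_of_le le_rfl) measurableSet_Ioc
            (hint ρ₀ hρS) hIr
          rw [hun] at hsu
          linarith [hsu]
        · rw [intervalIntegral.integral_symm, intervalIntegral.integral_of_le hle]
          have hun : Ioc B₁ r ∪ Ioc r ρ₀ = Ioc B₁ ρ₀ := Ioc_union_Ioc_eq_Ioc hr.1.le hle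
          have hIr : IntegrableOn ψ (Ioc r ρ₀) :=
            (hint ρ₀ hρS).mono_set (Ioc_subset_Ioc_left hr.1.le)
          have hsu := setIntegral_union (Set.Ioc_disjoint_Ioc_of_le le_rfl) measurableSet_Ioc
            (hint r hr) hIr
          rw [hun] at hsu
          linarith [hsu]
      · intro r hr
        have hrpos := hSpos hr
        have habs : |δ k - γr| = δ k - γr := abs_of_pos (by linarith)
        have hg0 : IntervalIntegrable (fun u : ℝ => u ^ (δ k - γr - 1)) volume 0 r :=
          intervalIntegral.intervalIntegrable_rpow' (by linarith)
        have hgIoc : IntegrableOn (fun u : ℝ => u ^ (δ k - γr - 1)) (Ioc 0 r) := by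
          rwa [intervalIntegrable_iff_integrableOn_Ioc_of_le hrpos.le] at hg0
        have h1 : |∫ u in Ioc B₁ r, ψ u| ≤ ∫ u in Ioc B₁ r, c k * u ^ (δ k - γr - 1) := by
          rw [← Real.norm_eq_abs]
          refine le_trans (MeasureTheory.norm_integral_le_integral_norm _) ?_
          have hgc' : IntegrableOn (fun u : ℝ => c k * u ^ (δ k - γr - 1)) (Ioc 0 r) :=
            hgIoc.const_mul (c k)
          refine setIntegral_mono_on ((hint r hr).norm)
            (hgc'.mono_set (Ioc_subset_Ioc_left hB₁))
            measurableSet_Ioc ?_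
          intro u hu
          simpa only [Real.norm_eq_abs] using hψbd u (hIocS r hr hu)
        have h2 : ∫ u in Ioc B₁ r, c k * u ^ (δ k - γr - 1)
            ≤ ∫ u in Ioc 0 r, c k * u ^ (δ k - γr - 1) := by
          have hgc' : IntegrableOn (fun u : ℝ => c k * u ^ (δ k - γr - 1)) (Ioc 0 r) :=
            hgIoc.const_mul (c k)
          refine setIntegral_mono_set hgc' ?_
            (HasSubset.Subset.eventuallyLE (Ioc_subset_Ioc_left hB₁))
          filter_upwards [ae_restrict_mem measurableSet_Ioc] with u hu
          exact mul_nonneg (hc k) (Real.rpow_pos_of_pos hu.1 _).le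
        have h3 : ∫ u in Ioc 0 r, c k * u ^ (δ k - γr - 1)
            = c k * r ^ (δ k - γr) / (δ k - γr) := by
          rw [MeasureTheory.integral_const_mul, ← intervalIntegral.integral_of_le hrpos.le,
            integral_rpow (Or.inl (by linarith))]
          have ee : δ k - γr - 1 + 1 = δ k - γr := by ring
          rw [ee, Real.zero_rpow (by intro hcon; exact (by linarith : γr < δ k).ne (by linarith))]
          ring
        have h4 : |∫ u in Ioc B₁ r, ψ u| ≤ c k * r ^ (δ k - γr) / (δ k - γr) :=
          le_trans h1 (le_trans h2 (le_of_eq h3))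
        have hx : r ^ γr * r ^ (δ k - γr) = r ^ δ k := by
          rw [← Real.rpow_add hrpos]; congr 1; ring
        calc r ^ γr * |∫ u in Ioc B₁ r, ψ u|
            ≤ r ^ γr * (c k * r ^ (δ k - γr) / (δ k - γr)) :=
              mul_le_mul_of_nonneg_left h4 (Real.rpow_pos_of_pos hrpos _).le
          _ = c k * (r ^ γr * r ^ (δ k - γr)) / (δ k - γr) := by ring
          _ = c k * r ^ δ k / |δ k - γr| := by rw [hx, habs]
  -- assemble
  choose Φ1 s1 hs1 hrel1 hbd1 using fun k => key k γ₁ (hδ k).1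
  choose Φ2 s2 hs2 hrel2 hbd2 using fun k => key k γ₂ (hδ k).2
  have hsum1 : ∀ γr : ℝ, ∀ r ∈ S,
      I γr r = ∑ k, ∫ u in ρ₀..r, u ^ (-γr - 1) * φk k u := by
    intro γr r hr
    rw [hIdef]
    rw [← intervalIntegral.integral_finset_sum
      (fun k _ => hII (φk k) (hφkm k) (hφk_bdden k) (-γr - 1) ρ₀ hρS r hr)]
    apply intervalIntegral.integral_congr
    intro u hu
    have huS : u ∈ S := hSuIcc hρS hr hu
    simp only
    rw [← Finset.mul_sum, hφk_sum u huS]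
  set Sb : ℝ → ℝ :=
    fun r => ∑ k, (s2 k * (r ^ γ₂ * Φ2 k r) - s1 k * (r ^ γ₁ * Φ1 k r)) with hSbdef
  have hVS : ∀ r ∈ S, V r = Sb r - r ^ γ₂ * (∑ k, s2 k * Φ2 k ρ₀)
      + r ^ γ₁ * (∑ k, s1 k * Φ1 k ρ₀) := by
    intro r hr
    simp only [hVdef]
    rw [hsum1 γ₂ r hr, hsum1 γ₁ r hr]
    rw [Finset.sum_congr rfl (fun k _ => hrel2 k r hr),
      Finset.sum_congr rfl (fun k _ => hrel1 k r hr)]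
    calc r ^ γ₂ * (∑ k, s2 k * (Φ2 k r - Φ2 k ρ₀))
          - r ^ γ₁ * (∑ k, s1 k * (Φ1 k r - Φ1 k ρ₀))
        = ∑ k, (r ^ γ₂ * (s2 k * (Φ2 k r - Φ2 k ρ₀))
            - r ^ γ₁ * (s1 k * (Φ1 k r - Φ1 k ρ₀))) := by
          rw [Finset.mul_sum, Finset.mul_sum, Finset.sum_sub_distrib]
      _ = ∑ k, ((s2 k * (r ^ γ₂ * Φ2 k r) - s1 k * (r ^ γ₁ * Φ1 k r))
            - r ^ γ₂ * (s2 k * Φ2 k ρ₀) + r ^ γ₁ * (s1 k * Φ1 k ρ₀)) :=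
          Finset.sum_congr rfl (fun k _ => by ring)
      _ = Sb r - r ^ γ₂ * (∑ k, s2 k * Φ2 k ρ₀) + r ^ γ₁ * (∑ k, s1 k * Φ1 k ρ₀) := by
          rw [Finset.sum_add_distrib, Finset.sum_sub_distrib, hSbdef]
          simp only
          rw [← Finset.mul_sum, ← Finset.mul_sum]
  have hne : γ₂ - γ₁ ≠ 0 := hγne.ne'
  refine ⟨(-K₁ + ∑ k, s1 k * Φ1 k ρ₀) / (γ₂ - γ₁),
    ((ρ₀ ^ (-γ₂) * ((γ₂ - γ₁) * f ρ₀ - V ρ₀) + K₁ * ρ₀ ^ (γ₁ - γ₂))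
      - ∑ k, s2 k * Φ2 k ρ₀) / (γ₂ - γ₁), ?_⟩
  intro r hrB hrB2
  have hr : r ∈ S := ⟨hrB, hrB2⟩
  have hrpos := hSpos hr
  have hfr := hrep r hr
  have hVr := hVS r hr
  have heq : f r - ((-K₁ + ∑ k, s1 k * Φ1 k ρ₀) / (γ₂ - γ₁)) * r ^ γ₁
      - (((ρ₀ ^ (-γ₂) * ((γ₂ - γ₁) * f ρ₀ - V ρ₀) + K₁ * ρ₀ ^ (γ₁ - γ₂))
        - ∑ k, s2 k * Φ2 k ρ₀) / (γ₂ - γ₁)) * r ^ γ₂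
      = Sb r / (γ₂ - γ₁) := by
    rw [div_mul_eq_mul_div, div_mul_eq_mul_div, eq_div_iff hne]
    field_simp
    linear_combination hfr + hVr
  rw [heq]
  have hterm : ∀ k : Fin p, |s2 k * (r ^ γ₂ * Φ2 k r) - s1 k * (r ^ γ₁ * Φ1 k r)|
      ≤ c k * r ^ δ k / |δ k - γ₂| + c k * r ^ δ k / |δ k - γ₁| := by
    intro k
    have h2 := hbd2 k r hr
    have h1 := hbd1 k r hr
    calc |s2 k * (r ^ γ₂ * Φ2 k r) - s1 k * (r ^ γ₁ * Φ1 k r)|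
        ≤ |s2 k * (r ^ γ₂ * Φ2 k r)| + |s1 k * (r ^ γ₁ * Φ1 k r)| := abs_sub _ _
      _ = r ^ γ₂ * |Φ2 k r| + r ^ γ₁ * |Φ1 k r| := by
          simp [abs_mul, hs2 k, hs1 k,
            abs_of_nonneg (Real.rpow_pos_of_pos hrpos γ₂).le,
            abs_of_nonneg (Real.rpow_pos_of_pos hrpos γ₁).le]
      _ ≤ _ := add_le_add h2 h1
  rw [abs_div, abs_of_pos hγne]
  calc |Sb r| / (γ₂ - γ₁)
      ≤ (∑ k, (c k * r ^ δ k / |δ k - γ₂| + c k * r ^ δ k / |δ k - γ₁|)) / (γ₂ - γ₁) := by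
        refine (div_le_div_iff_of_pos_right hγne).mpr ?_
        refine le_trans ?_ (Finset.sum_le_sum (fun k _ => hterm k))
        rw [hSbdef]
        exact Finset.abs_sum_le_sum_abs _ _
    _ = ∑ k, eulerC a b (δ k) (c k) * r ^ δ k := by
        rw [Finset.sum_div]
        refine Finset.sum_congr rfl (fun k _ => ?_)
        rw [hCval k]
        have d1 : |δ k - γ₁| ≠ 0 := abs_ne_zero.mpr (sub_ne_zero.mpr (hδ k).1)
        have d2 : |δ k - γ₂| ≠ 0 := abs_ne_zero.mpr (sub_ne_zero.mpr (hδ k).2)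
        field_simp
        ring
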